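/- For the Rhaly generalized Cesàro matrix D with parameter 0 < t < 1 one has the bound |d̂_{nv}| = O(1/(n(n+1)) + t^{n-v}/(n+1)) uniformly in 0 ≤ v ≤ n-1, and consequently Σ_{v=0}^n |d_{vv} d̂_{n,v+1}| = O(1/n) as n → ∞. -/

import Mathlib

/-- For the Rhaly generalized Cesàro matrix with `0 < t < 1`:
`|d̂_{nv}| = O(1/(n(n+1)) + t^{n-v}/(n+1))` uniformly in `0 ≤ v ≤ n-1`, and
`Σ_{v=0}^n |d_{vv} d̂_{n,v+1}| = O(1/n)`. -/
theorem rhaly_hat_bounds (t : ℝ) (ht0 : 0 < t) (ht1 : t < 1)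
    (d dhat : ℕ → ℕ → ℝ)
    (hd : ∀ n k : ℕ, k ≤ n → d n k = t ^ (n - k) / ((n : ℝ) + 1))
    (hdhat : ∀ n v : ℕ, 1 ≤ n → v ≤ n - 1 →
      dhat n v = (1 / (1 - t)) *
        ((1 - t ^ (n - v + 1)) / ((n : ℝ) + 1) - (1 - t ^ (n - v)) / (n : ℝ)))
    (hdhatd : ∀ n : ℕ, dhat n n = d n n)
    (hdhat0 : ∀ n v : ℕ, n < v → dhat n v = 0) :
    (∃ C : ℝ, ∀ n v : ℕ, 1 ≤ n → v ≤ n - 1 →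
      |dhat n v| ≤ C * (1 / ((n : ℝ) * ((n : ℝ) + 1)) + t ^ (n - v) / ((n : ℝ) + 1))) ∧
    (∃ C : ℝ, ∀ n : ℕ, 1 ≤ n →
      ∑ v ∈ Finset.range (n + 1), |d v v * dhat n (v + 1)| ≤ C / n) := by
  have hs : 0 < 1 - t := by linarith
  set C₁ : ℝ := 2 / (1 - t) with hC₁def
  have hC₁ : 0 < C₁ := by positivity
  have part1 : ∀ n v : ℕ, 1 ≤ n → v ≤ n - 1 →
      |dhat n v| ≤ C₁ * (1 / ((n : ℝ) * ((n : ℝ) + 1)) + t ^ (n - v) / ((n : ℝ) + 1)) := by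
    intro n v hn hv
    have hn0 : (0:ℝ) < n := by exact_mod_cast hn
    have htm0 : (0:ℝ) ≤ t ^ (n - v) := by positivity
    have htm1 : t ^ (n - v) ≤ 1 := pow_le_one₀ ht0.le ht1.le
    have htmn : (0:ℝ) ≤ t ^ (n - v) * n := by positivity
    rw [hdhat n v hn hv]
    have key : (1 - t ^ (n - v + 1)) / ((n : ℝ) + 1) - (1 - t ^ (n - v)) / (n : ℝ)
        = (t ^ (n - v) * (1 + (n:ℝ) * (1 - t)) - 1) / ((n:ℝ) * ((n:ℝ) + 1)) := by
      rw [pow_succ]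
      field_simp
      ring
    rw [key, abs_mul, abs_of_pos (show (0:ℝ) < 1 / (1 - t) by positivity), abs_div,
      abs_of_pos (show (0:ℝ) < (n:ℝ) * ((n:ℝ)+1) by positivity)]
    have habs : |t ^ (n - v) * (1 + (n:ℝ) * (1 - t)) - 1| ≤ t ^ (n - v) * ((n:ℝ) + 1) + 1 := by
      rw [abs_le]
      constructor
      · nlinarith
      · nlinarith
    have e1 : 1 / (1 - t) * ((t ^ (n - v) * ((n:ℝ) + 1) + 1) / ((n:ℝ) * ((n:ℝ) + 1)))
        = (t ^ (n - v) * ((n:ℝ) + 1) + 1) / ((1 - t) * ((n:ℝ) * ((n:ℝ) + 1))) := by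
      field_simp
    have e2 : C₁ * (1 / ((n : ℝ) * ((n : ℝ) + 1)) + t ^ (n - v) / ((n : ℝ) + 1))
        = (2 * (1 + t ^ (n - v) * (n:ℝ))) / ((1 - t) * ((n:ℝ) * ((n:ℝ) + 1))) := by
      rw [hC₁def]
      field_simp
    calc 1 / (1 - t) * (|t ^ (n - v) * (1 + (n:ℝ) * (1 - t)) - 1| / ((n:ℝ) * ((n:ℝ) + 1)))
        ≤ 1 / (1 - t) * ((t ^ (n - v) * ((n:ℝ) + 1) + 1) / ((n:ℝ) * ((n:ℝ) + 1))) := by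
          gcongr
      _ = (t ^ (n - v) * ((n:ℝ) + 1) + 1) / ((1 - t) * ((n:ℝ) * ((n:ℝ) + 1))) := e1
      _ ≤ (2 * (1 + t ^ (n - v) * (n:ℝ))) / ((1 - t) * ((n:ℝ) * ((n:ℝ) + 1))) := by
          gcongr
          linarith
      _ = C₁ * (1 / ((n : ℝ) * ((n : ℝ) + 1)) + t ^ (n - v) / ((n : ℝ) + 1)) := e2.symm
  refine ⟨⟨C₁, part1⟩, ⟨(C₁ + 1) + C₁ * (1 / (1 - t) + 1), ?_⟩⟩
  intro n hn
  have hn0 : (0:ℝ) < n := by exact_mod_cast hn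
  have hD : (0:ℝ) < (n:ℝ) * ((n:ℝ) + 1) := by positivity
  set B : ℕ → ℝ := fun v => (C₁ + 1) / ((n:ℝ) * ((n:ℝ) + 1)) + C₁ * t ^ (n - 1 - v) / ((n:ℝ) + 1)
    with hB
  have hBpos : ∀ v : ℕ, 0 ≤ C₁ * t ^ (n - 1 - v) / ((n:ℝ) + 1) := fun v =>
    div_nonneg (mul_nonneg hC₁.le (pow_nonneg ht0.le _)) (by positivity)
  have hpt : ∀ v ∈ Finset.range (n + 1), |d v v * dhat n (v + 1)| ≤ B v := by
    intro v hv
    have hvn : v ≤ n := by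
      simpa [Finset.mem_range, Nat.lt_succ_iff] using hv
    have hdvv : |d v v| ≤ 1 := by
      rw [hd v v le_rfl]
      simp only [Nat.sub_self, pow_zero]
      rw [abs_of_pos (by positivity), div_le_one (by positivity)]
      have : (0:ℝ) ≤ (v:ℝ) := Nat.cast_nonneg v
      linarith
    rcases (show v + 1 ≤ n - 1 ∨ v + 1 = n ∨ v = n by omega) with h | h | h
    · have hb := part1 n (v+1) hn h
      have hexp : n - (v + 1) = n - 1 - v := by omega
      rw [hexp] at hb
      calc |d v v * dhat n (v+1)| = |d v v| * |dhat n (v+1)| := abs_mul _ _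
        _ ≤ 1 * (C₁ * (1 / ((n:ℝ)*((n:ℝ)+1)) + t ^ (n-1-v) / ((n:ℝ)+1))) :=
            mul_le_mul hdvv hb (abs_nonneg _) zero_le_one
        _ ≤ B v := by
            rw [one_mul, hB]
            have e : C₁ * (1 / ((n:ℝ)*((n:ℝ)+1)) + t ^ (n-1-v) / ((n:ℝ)+1))
                = C₁ / ((n:ℝ)*((n:ℝ)+1)) + C₁ * t ^ (n-1-v) / ((n:ℝ)+1) := by ring
            have e2 : (C₁ + 1) / ((n:ℝ)*((n:ℝ)+1))
                = C₁ / ((n:ℝ)*((n:ℝ)+1)) + 1 / ((n:ℝ)*((n:ℝ)+1)) := add_div _ _ _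
            have h1 : (0:ℝ) ≤ 1 / ((n:ℝ)*((n:ℝ)+1)) := by positivity
            rw [e]
            simp only [e2]
            linarith
    · have e1 : dhat n (v+1) = 1 / ((n:ℝ)+1) := by
        rw [h, hdhatd, hd n n le_rfl]
        simp
      have hvcast : ((v:ℝ) + 1) = (n:ℝ) := by exact_mod_cast h
      have e2 : d v v = 1 / (n:ℝ) := by
        rw [hd v v le_rfl]
        simp [hvcast]
      rw [e1, e2, abs_of_pos (by positivity)]
      have e3 : 1 / (n:ℝ) * (1 / ((n:ℝ)+1)) = 1 / ((n:ℝ)*((n:ℝ)+1)) := by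
        rw [div_mul_div_comm, one_mul]
      have h3 : (1:ℝ) / ((n:ℝ)*((n:ℝ)+1)) ≤ (C₁+1) / ((n:ℝ)*((n:ℝ)+1)) := by
        gcongr
        linarith
      rw [e3, hB]
      have := hBpos v
      linarith
    · have e1 : dhat n (v+1) = 0 := hdhat0 n (v+1) (by omega)
      rw [e1, mul_zero, abs_zero, hB]
      have h1 : (0:ℝ) ≤ (C₁+1) / ((n:ℝ)*((n:ℝ)+1)) := by positivity
      have := hBpos v
      linarith
  have hsum : ∑ v ∈ Finset.range (n+1), |d v v * dhat n (v+1)| ≤ ∑ v ∈ Finset.range (n+1), B v :=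
    Finset.sum_le_sum hpt
  have hBsum : ∑ v ∈ Finset.range (n+1), B v
      = ((n:ℝ)+1) * ((C₁+1)/((n:ℝ)*((n:ℝ)+1)))
        + (C₁/((n:ℝ)+1)) * ∑ v ∈ Finset.range (n+1), t ^ (n-1-v) := by
    rw [hB, Finset.sum_add_distrib, Finset.sum_const, Finset.card_range, Finset.mul_sum,
      nsmul_eq_mul]
    push_cast
    congr 1
    refine Finset.sum_congr rfl fun v _ => ?_
    ring
  have hgeo : ∑ v ∈ Finset.range (n+1), t ^ (n-1-v) ≤ 1/(1-t) + 1 := by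
    rw [Finset.sum_range_succ, Finset.sum_range_reflect (fun i => t ^ i) n]
    have hz : n - 1 - n = 0 := by omega
    rw [hz, pow_zero]
    have h2 : ∑ v ∈ Finset.range n, t ^ v ≤ 1/(1-t) := by
      rw [geom_sum_eq (by linarith : t ≠ 1)]
      have e : (t ^ n - 1) / (t - 1) = (1 - t ^ n) / (1 - t) := by
        rw [div_eq_div_iff (by linarith) (by linarith)]
        ring
      rw [e]
      gcongr; nlinarith [pow_nonneg ht0.le n]
    linarith
  have hgeo0 : 0 ≤ ∑ v ∈ Finset.range (n+1), t ^ (n-1-v) :=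
    Finset.sum_nonneg fun v _ => pow_nonneg ht0.le _
  have ef : ((n:ℝ)+1) * ((C₁+1)/((n:ℝ)*((n:ℝ)+1))) = (C₁+1)/(n:ℝ) := by
    field_simp
  have h5 : (C₁/((n:ℝ)+1)) * ∑ v ∈ Finset.range (n+1), t ^ (n-1-v)
      ≤ (C₁/(n:ℝ)) * (1/(1-t) + 1) := by
    have h6 : C₁/((n:ℝ)+1) ≤ C₁/(n:ℝ) := by
      gcongr
      linarith
    exact mul_le_mul h6 hgeo hgeo0 (by positivity)
  have e7 : (C₁/(n:ℝ)) * (1/(1-t) + 1) = C₁ * (1/(1-t) + 1) / (n:ℝ) := by ring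
  have e8 : ((C₁ + 1) + C₁ * (1 / (1 - t) + 1)) / (n:ℝ)
      = (C₁+1)/(n:ℝ) + C₁ * (1/(1-t) + 1) / (n:ℝ) := add_div _ _ _
  rw [e8]
  rw [hBsum, ef] at hsum
  linarith [h5, e7 ▸ h5]
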